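/- Let X be a finite type with basepoint 0 and f : X → X with f 0 = 0, and suppose the graph Γ of (X, 0, f) is connected. Then exactly one of the following holds: either f is nilpotent (for every x there exists n with f^[n] x = 0), so Γ is a rooted tree, or f x ≠ 0 for every nonzero x, so Γ is a wheel. In particular, every indecomposable finite ⟨t⟩-module is either a rooted tree or a wheel. -/
import Mathlib


/-- **Proposition (classification of indecomposable `⟨t⟩`-modules: trees and wheels).**
Let `X` be a finite pointed type with structure map `f` fixing the basepoint, and
suppose the graph `Γ` of `(X, 0, f)` is connected.  Then exactly one of the
following holds: either `f` is nilpotent (`Γ` is a rooted tree), or `f x ≠ 0` for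
every nonzero `x` (`Γ` is a wheel).  In particular every indecomposable finite
`⟨t⟩`-module is either a rooted tree or a wheel. -/
theorem indecomposable_tree_or_wheel {X : Type*} [Finite X] [Zero X]
    (f : X → X) (hf : f 0 = 0)
    (hconn : Nat.card (Quot (Relation.EqvGen
      (fun x y : {x : X // x ≠ 0} => f (x : X) ≠ 0 ∧ (y : X) = f (x : X)))) = 1) :
    Xor' (∀ x : X, ∃ n : ℕ, f^[n] x = 0) (∀ x : X, x ≠ 0 → f x ≠ 0) := by
  set S := {x : X // x ≠ 0}
  set R : S → S → Prop := fun x y => f (x : X) ≠ 0 ∧ (y : X) = f (x : X) with hR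
  -- the quotient is a singleton
  have hne : Nonempty (Quot (Relation.EqvGen R)) := by
    have := hconn
    rcases Nat.card_eq_one_iff_exists.mp hconn with ⟨q, _⟩
    exact ⟨q⟩
  obtain ⟨q0⟩ := hne
  have hS : Nonempty S := by
    induction q0 using Quot.ind with
    | _ x => exact ⟨x⟩
  have hsub : Subsingleton (Quot (Relation.EqvGen R)) :=
    Nat.card_eq_one_iff_unique.mp hconn |>.1
  have hequiv : ∀ x y : S, Relation.EqvGen R x y := by
    intro x y
    have : Quot.mk (Relation.EqvGen R) x = Quot.mk (Relation.EqvGen R) y := Subsingleton.elim _ _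
    exact ((Relation.EqvGen.is_equivalence R).eqvGen_iff).mp (Quot.eqvGen_exact this)
  -- P x : orbit of x eventually hits 0
  have hPresp : ∀ x y : S, Relation.EqvGen R x y →
      ((∃ n, f^[n] (x : X) = 0) ↔ (∃ n, f^[n] (y : X) = 0)) := by
    intro x y h
    induction h with
    | rel a b hab =>
      obtain ⟨hfa, hb⟩ := hab
      constructor
      · rintro ⟨n, hn⟩
        cases n with
        | zero => exact absurd hn a.2
        | succ m =>
          refine ⟨m, ?_⟩
          rw [hb, ← Function.iterate_succ_apply]
          exact hn
      · rintro ⟨n, hn⟩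
        refine ⟨n + 1, ?_⟩
        rw [Function.iterate_succ_apply, ← hb]
        exact hn
    | refl a => rfl
    | symm a b _ ih => exact ih.symm
    | trans a b c _ _ ih1 ih2 => exact ih1.trans ih2
  by_cases hz : ∃ x : X, x ≠ 0 ∧ f x = 0
  · -- nilpotent case
    obtain ⟨x0, hx0, hfx0⟩ := hz
    left
    constructor
    · intro x
      by_cases hx : x = 0
      · exact ⟨0, hx⟩
      · have := (hPresp ⟨x, hx⟩ ⟨x0, hx0⟩ (hequiv _ _)).mpr ⟨1, hfx0⟩
        exact this
    · intro hall
      exact hall x0 hx0 hfx0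
  · -- wheel case
    push_neg at hz
    right
    refine ⟨hz, ?_⟩
    intro hnil
    obtain ⟨x⟩ := hS
    obtain ⟨n, hn⟩ := hnil (x : X)
    have : ∀ n, f^[n] (x : X) ≠ 0 := by
      intro n
      induction n with
      | zero => exact x.2
      | succ m ih =>
        rw [Function.iterate_succ_apply']
        exact hz _ ih
    exact this n hn
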